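/- Let λ be a nonzero real number, κ₁ : ℝ → ℝ a continuous function, c₀ ∈ ℝ, define θ(u) = c₀ − ∫₀ᵘ κ₁(t) dt, and let J ⊆ ℝ be an interval on which cos θ(u) ≠ 0. Define τ₁(u) = −(1/λ)·tan θ(u) on J. Then τ₁ is differentiable on J and satisfies τ₁'(u) = (κ₁(u)/λ)·(λ²·τ₁(u)² + 1) for all u in J. In particular, the equation τ₁' = (κ₁/λ)(λ²τ₁² + 1) characterizing the torsion of a Mannheim partner curve in the Galilean space G₃ admits this explicit solution. -/

import Mathlib

/-- With `θ(u) = c₀ − ∫₀ᵘ κ₁(t) dt` and `τ₁ = −(1/λ)·tan θ` on an interval `J`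
where `cos θ` does not vanish (`λ ≠ 0`, `κ₁` continuous), `τ₁` is
differentiable on `J` and solves `τ₁' = (κ₁/λ)(λ²τ₁² + 1)` there, the equation
characterizing the torsion of a Mannheim partner curve in the Galilean
space `G₃`. -/
theorem galilean_mannheim_torsion_explicit_solution
    (lam : ℝ) (hlam : lam ≠ 0)
    (κ₁ : ℝ → ℝ) (hκ₁ : Continuous κ₁) (c₀ : ℝ)
    (θ τ₁ : ℝ → ℝ)
    (hθ : θ = fun u => c₀ - ∫ t in (0 : ℝ)..u, κ₁ t)
    (J : Set ℝ) (hJ : J.OrdConnected)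
    (hcos : ∀ u ∈ J, Real.cos (θ u) ≠ 0)
    (hτ₁ : τ₁ = fun u => -(1 / lam) * Real.tan (θ u)) :
    ∀ u ∈ J, DifferentiableAt ℝ τ₁ u ∧
      deriv τ₁ u = (κ₁ u / lam) * (lam ^ 2 * (τ₁ u) ^ 2 + 1) := by
  intro u hu
  have hc := hcos u hu
  have hint : HasDerivAt (fun u => ∫ t in (0 : ℝ)..u, κ₁ t) (κ₁ u) u :=
    intervalIntegral.integral_hasDerivAt_right (hκ₁.intervalIntegrable _ _)
      (hκ₁.stronglyMeasurableAtFilter _ _) hκ₁.continuousAt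
  have hθ' : HasDerivAt θ (-κ₁ u) u := by
    rw [hθ]
    exact ((hasDerivAt_const u c₀).sub hint).congr_deriv (zero_sub _)
  have htan : HasDerivAt (fun u => Real.tan (θ u))
      (1 / Real.cos (θ u) ^ 2 * (-κ₁ u)) u :=
    (Real.hasDerivAt_tan hc).comp u hθ'
  have hτ : HasDerivAt τ₁ (-(1 / lam) * (1 / Real.cos (θ u) ^ 2 * (-κ₁ u))) u := by
    rw [hτ₁]
    exact htan.const_mul _
  refine ⟨hτ.differentiableAt, ?_⟩
  rw [hτ.deriv, hτ₁]
  have h1 : Real.tan (θ u) ^ 2 + 1 = 1 / Real.cos (θ u) ^ 2 := by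
    rw [Real.tan_eq_sin_div_cos]
    field_simp
    exact Real.sin_sq_add_cos_sq _
  have hc2 : Real.cos (θ u) ^ 2 ≠ 0 := pow_ne_zero _ hc
  have h2 : lam ^ 2 * (-(1 / lam) * Real.tan (θ u)) ^ 2 = Real.tan (θ u) ^ 2 := by
    field_simp
  simp only [h2, h1]
  field_simp
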